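/- Let Z be a bounded nonnegative random variable on a finite probability space with distribution P, and let ρ > 0, k ∈ (1,∞), k_* = k/(k−1), c_k(ρ) = (1 + k(k−1)ρ)^{1/k}. Then the worst-case risk sup{E_Q[Z] : Q ≪ P, D_{f_k}(Q‖P) ≤ ρ} equals inf_{η ∈ ℝ} { c_k(ρ) · (E_P[(Z − η)₊^{k_*}])^{1/k_*} + η }. -/

import Mathlib

open Finset

private lemma crd_expand {α : Type*} [Fintype α] (p q : α → ℝ)
    (hp : ∀ x, 0 < p x) (k : ℝ) :
    ∑ x, p x * (((q x / p x) ^ k - k * (q x / p x) + k - 1) / (k * (k - 1))) =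
      ((∑ x, p x * (q x / p x) ^ k) - k * (∑ x, q x) + (k - 1) * (∑ x, p x)) /
        (k * (k - 1)) := by
  have h : ∀ x : α, p x * (((q x / p x) ^ k - k * (q x / p x) + k - 1) / (k * (k - 1))) =
      (p x * (q x / p x) ^ k - k * q x + (k - 1) * p x) / (k * (k - 1)) := by
    intro x
    have hpx : p x ≠ 0 := (hp x).ne'
    have h1 : p x * (q x / p x) = q x := by field_simp
    rw [← mul_div_assoc]
    congr 1
    calc p x * ((q x / p x) ^ k - k * (q x / p x) + k - 1)
        = p x * (q x / p x) ^ k - k * (p x * (q x / p x)) + (k - 1) * p x := by ring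
      _ = p x * (q x / p x) ^ k - k * q x + (k - 1) * p x := by rw [h1]
  rw [Finset.sum_congr rfl (fun x _ => h x), ← Finset.sum_div]
  congr 1
  rw [Finset.sum_add_distrib, Finset.sum_sub_distrib, ← Finset.mul_sum, ← Finset.mul_sum]

private lemma max_rpow_mul (t a : ℝ) (ha : 0 < a) :
    max t 0 ^ a * t = max t 0 ^ (a + 1) := by
  rcases lt_trichotomy t 0 with h | h | h
  · rw [max_eq_right h.le, Real.zero_rpow ha.ne', Real.zero_rpow (by linarith), zero_mul]
  · simp [h, Real.zero_rpow ha.ne', Real.zero_rpow (show a + 1 ≠ 0 by linarith)]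
  · rw [max_eq_left h.le, Real.rpow_add_one h.ne']

private lemma crd_weak {α : Type*} [Fintype α] (p : α → ℝ)
    (hp : ∀ x, 0 < p x) (hp1 : ∑ x, p x = 1) (Z : α → ℝ)
    (k ρ : ℝ) (hk : 1 < k) (hρ : 0 < ρ)
    (q : α → ℝ) (hq0 : ∀ x, 0 ≤ q x) (hq1 : ∑ x, q x = 1)
    (hqD : ∑ x, p x * (((q x / p x) ^ k - k * (q x / p x) + k - 1) / (k * (k - 1))) ≤ ρ)
    (η : ℝ) :
    ∑ x, q x * Z x ≤ (1 + k * (k - 1) * ρ) ^ (1 / k) *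
      (∑ x, p x * max (Z x - η) 0 ^ (k / (k - 1))) ^ ((k - 1) / k) + η := by
  have hk0 : (0:ℝ) < k := by linarith
  have hk1 : (0:ℝ) < k - 1 := by linarith
  have hkk : 0 < k * (k - 1) := mul_pos hk0 hk1
  have hmom : ∑ x, p x * (q x / p x) ^ k ≤ 1 + k * (k - 1) * ρ := by
    have h2 := hqD
    rw [crd_expand p q hp k, hq1, hp1, div_le_iff₀ hkk] at h2
    nlinarith
  have hmom0 : 0 ≤ ∑ x, p x * (q x / p x) ^ k :=
    Finset.sum_nonneg fun x _ => mul_nonneg (hp x).le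
      (Real.rpow_nonneg (div_nonneg (hq0 x) (hp x).le) k)
  have hpq : Real.HolderConjugate k (k / (k - 1)) :=
    (Real.holderConjugate_iff_eq_conjExponent hk).2 rfl
  -- Hölder
  have holder : ∑ x, q x * max (Z x - η) 0 ≤
      (∑ x, p x * (q x / p x) ^ k) ^ (1 / k) *
      (∑ x, p x * max (Z x - η) 0 ^ (k / (k - 1))) ^ ((k - 1) / k) := by
    have hmono := Real.inner_le_Lp_mul_Lq_of_nonneg (s := Finset.univ)
      (f := fun x => p x ^ (1/k) * (q x / p x))
      (g := fun x => p x ^ ((k-1)/k) * max (Z x - η) 0) hpq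
      (fun x _ => mul_nonneg (Real.rpow_nonneg (hp x).le _) (div_nonneg (hq0 x) (hp x).le))
      (fun x _ => mul_nonneg (Real.rpow_nonneg (hp x).le _) (le_max_right _ _))
    have e1 : ∀ x : α, p x ^ (1/k) * (q x / p x) * (p x ^ ((k-1)/k) * max (Z x - η) 0)
        = q x * max (Z x - η) 0 := by
      intro x
      have : p x ^ (1/k) * p x ^ ((k-1)/k) = p x := by
        rw [← Real.rpow_add (hp x), show 1/k + (k-1)/k = 1 by field_simp; ring, Real.rpow_one]
      calc p x ^ (1/k) * (q x / p x) * (p x ^ ((k-1)/k) * max (Z x - η) 0)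
          = (p x ^ (1/k) * p x ^ ((k-1)/k)) * (q x / p x) * max (Z x - η) 0 := by ring
        _ = p x * (q x / p x) * max (Z x - η) 0 := by rw [this]
        _ = q x * max (Z x - η) 0 := by rw [mul_div_cancel₀ _ (hp x).ne']
    have e2 : ∀ x : α, (p x ^ (1/k) * (q x / p x)) ^ k = p x * (q x / p x) ^ k := by
      intro x
      rw [Real.mul_rpow (Real.rpow_nonneg (hp x).le _) (div_nonneg (hq0 x) (hp x).le),
        ← Real.rpow_mul (hp x).le, one_div_mul_cancel hk0.ne', Real.rpow_one]
    have e3 : ∀ x : α, (p x ^ ((k-1)/k) * max (Z x - η) 0) ^ (k/(k-1))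
        = p x * max (Z x - η) 0 ^ (k/(k-1)) := by
      intro x
      rw [Real.mul_rpow (Real.rpow_nonneg (hp x).le _) (le_max_right _ _),
        ← Real.rpow_mul (hp x).le, show (k-1)/k * (k/(k-1)) = 1 by field_simp, Real.rpow_one]
    rw [Finset.sum_congr rfl (fun x _ => e1 x), Finset.sum_congr rfl (fun x _ => e2 x),
      Finset.sum_congr rfl (fun x _ => e3 x), show 1 / (k/(k-1)) = (k-1)/k from one_div_div _ _]
      at hmono
    exact hmono
  have step1 : ∑ x, q x * Z x ≤ ∑ x, q x * max (Z x - η) 0 + η := by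
    have e : ∑ x, q x * Z x = ∑ x, q x * (Z x - η) + η := by
      have e0 : ∑ x, (q x * (Z x - η) + q x * η) = ∑ x, q x * (Z x - η) + (∑ x, q x) * η := by
        rw [Finset.sum_add_distrib, ← Finset.sum_mul]
      rw [Finset.sum_congr rfl
          (fun x _ => (by ring : q x * Z x = q x * (Z x - η) + q x * η)),
        e0, hq1, one_mul]
    rw [e]
    have := Finset.sum_le_sum (fun x (_ : x ∈ Finset.univ) =>
      mul_le_mul_of_nonneg_left (le_max_left (Z x - η) 0) (hq0 x))
    linarith
  have hT0 : (0:ℝ) ≤ (∑ x, p x * max (Z x - η) 0 ^ (k / (k - 1))) ^ ((k - 1) / k) :=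
    Real.rpow_nonneg (Finset.sum_nonneg fun x _ => mul_nonneg (hp x).le
      (Real.rpow_nonneg (le_max_right _ _) _)) _
  have hc : (∑ x, p x * (q x / p x) ^ k) ^ (1/k) ≤ (1 + k * (k - 1) * ρ) ^ (1/k) :=
    Real.rpow_le_rpow hmom0 hmom (by positivity)
  have := mul_le_mul_of_nonneg_right hc hT0
  linarith

private lemma crd_point {α : Type*} [Fintype α] (p : α → ℝ)
    (hp : ∀ x, 0 < p x) (hp1 : ∑ x, p x = 1) (Z : α → ℝ)
    (k ρ : ℝ) (hk : 1 < k) (hρ : 0 < ρ) (η : ℝ)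
    (hT : 0 < ∑ x, p x * max (Z x - η) 0 ^ (k / (k - 1)))
    (hF : (1 + k * (k - 1) * ρ) ^ (1 / k) *
        ∑ x, p x * max (Z x - η) 0 ^ (k / (k - 1) - 1) =
      (∑ x, p x * max (Z x - η) 0 ^ (k / (k - 1))) ^ (1 / k)) :
    ∃ q : α → ℝ, (∀ x, 0 ≤ q x) ∧ (∑ x, q x) = 1 ∧
      (∑ x, p x * (((q x / p x) ^ k - k * (q x / p x) + k - 1) / (k * (k - 1)))) ≤ ρ ∧
      ∑ x, q x * Z x = (1 + k * (k - 1) * ρ) ^ (1 / k) *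
        (∑ x, p x * max (Z x - η) 0 ^ (k / (k - 1))) ^ ((k - 1) / k) + η := by
  have hk0 : (0:ℝ) < k := by linarith
  have hk1 : (0:ℝ) < k - 1 := by linarith
  have hkk : 0 < k * (k - 1) := mul_pos hk0 hk1
  have he1 : (0:ℝ) < k / (k - 1) - 1 := by
    rw [sub_pos, lt_div_iff₀ hk1]; linarith
  set T : ℝ := ∑ x, p x * max (Z x - η) 0 ^ (k / (k - 1)) with hTdef
  set S : ℝ := ∑ x, p x * max (Z x - η) 0 ^ (k / (k - 1) - 1) with hSdef
  have hb : (0:ℝ) < 1 + k * (k - 1) * ρ := by nlinarith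
  set c : ℝ := (1 + k * (k - 1) * ρ) ^ (1 / k) with hcdef
  have hc : 0 < c := Real.rpow_pos_of_pos hb _
  have hck : c ^ k = 1 + k * (k - 1) * ρ := by
    rw [hcdef, ← Real.rpow_mul hb.le, one_div_mul_cancel hk0.ne', Real.rpow_one]
  have hTk : (0:ℝ) < T ^ (1 / k) := Real.rpow_pos_of_pos hT _
  have hTkk : (T ^ (1 / k)) ^ k = T := by
    rw [← Real.rpow_mul hT.le, one_div_mul_cancel hk0.ne', Real.rpow_one]
  set lam : ℝ := c / T ^ (1 / k) with hlamdef
  have hlam : 0 < lam := div_pos hc hTk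
  refine ⟨fun x => lam * (p x * max (Z x - η) 0 ^ (k / (k - 1) - 1)), fun x => ?_, ?_, ?_, ?_⟩
  · exact mul_nonneg hlam.le (mul_nonneg (hp x).le (Real.rpow_nonneg (le_max_right _ _) _))
  · rw [← Finset.mul_sum, ← hSdef, hlamdef, div_mul_eq_mul_div, hF, div_self hTk.ne']
  · have hqdiv : ∀ x : α, lam * (p x * max (Z x - η) 0 ^ (k / (k - 1) - 1)) / p x
        = lam * max (Z x - η) 0 ^ (k / (k - 1) - 1) := by
      intro x
      rw [mul_div_assoc, mul_div_cancel_left₀ _ (hp x).ne']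
    have hqpk : ∀ x : α,
        p x * (lam * (p x * max (Z x - η) 0 ^ (k / (k - 1) - 1)) / p x) ^ k
          = lam ^ k * (p x * max (Z x - η) 0 ^ (k / (k - 1))) := by
      intro x
      rw [hqdiv x, Real.mul_rpow hlam.le (Real.rpow_nonneg (le_max_right _ _) _),
        ← Real.rpow_mul (le_max_right _ _),
        show (k / (k - 1) - 1) * k = k / (k - 1) by field_simp; ring]
      ring
    have hlamk : lam ^ k = c ^ k / T := by
      rw [hlamdef, Real.div_rpow hc.le hTk.le, hTkk]
    have hsum : ∑ x, p x * (lam * (p x * max (Z x - η) 0 ^ (k / (k - 1) - 1)) / p x) ^ k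
        = 1 + k * (k - 1) * ρ := by
      rw [Finset.sum_congr rfl (fun x _ => hqpk x), ← Finset.mul_sum, ← hTdef, hlamk, hck,
        div_mul_cancel₀ _ hT.ne']
    rw [crd_expand p _ hp k, hsum, hp1,
      ← Finset.mul_sum, ← hSdef]
    have hS1 : lam * S = 1 := by
      rw [hlamdef, div_mul_eq_mul_div, hF, div_self hTk.ne']
    rw [hS1]
    rw [div_le_iff₀ hkk]
    nlinarith
  · have e : ∀ x : α, lam * (p x * max (Z x - η) 0 ^ (k / (k - 1) - 1)) * Z x
        = lam * (p x * max (Z x - η) 0 ^ (k / (k - 1)))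
          + lam * (p x * max (Z x - η) 0 ^ (k / (k - 1) - 1)) * η := by
      intro x
      have h1 : max (Z x - η) 0 ^ (k / (k - 1) - 1) * (Z x - η)
          = max (Z x - η) 0 ^ (k / (k - 1)) := by
        rw [max_rpow_mul _ _ he1, sub_add_cancel]
      calc lam * (p x * max (Z x - η) 0 ^ (k / (k - 1) - 1)) * Z x
          = lam * (p x * (max (Z x - η) 0 ^ (k / (k - 1) - 1) * (Z x - η)))
            + lam * (p x * max (Z x - η) 0 ^ (k / (k - 1) - 1)) * η := by ring
        _ = _ := by rw [h1]
    have hS1 : lam * S = 1 := by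
      rw [hlamdef, div_mul_eq_mul_div, hF, div_self hTk.ne']
    have hsplit : ∑ x, lam * (p x * max (Z x - η) 0 ^ (k / (k - 1) - 1)) * Z x
        = lam * T + (lam * S) * η := by
      rw [Finset.sum_congr rfl (fun x _ => e x), Finset.sum_add_distrib, ← Finset.mul_sum,
        ← hTdef, ← Finset.sum_mul, ← Finset.mul_sum, ← hSdef]
    rw [hsplit, hS1, one_mul]
    congr 1
    rw [hlamdef, div_mul_eq_mul_div, show (k-1)/k = 1 - 1/k by field_simp,
      Real.rpow_sub hT, Real.rpow_one, mul_div_assoc]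

theorem cressie_read_dual {α : Type*} [Fintype α] (p : α → ℝ)
    (hp : ∀ x, 0 < p x) (hp1 : ∑ x, p x = 1)
    (M : ℝ) (Z : α → ℝ) (hZ : ∀ x, Z x ∈ Set.Icc (0 : ℝ) M)
    (k ρ : ℝ) (hk : 1 < k) (hρ : 0 < ρ) :
    sSup {r : ℝ | ∃ q : α → ℝ, (∀ x, 0 ≤ q x) ∧ (∑ x, q x) = 1 ∧
        (∑ x, p x * (((q x / p x) ^ k - k * (q x / p x) + k - 1) / (k * (k - 1)))) ≤ ρ ∧
        r = ∑ x, q x * Z x} =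
      ⨅ η : ℝ, (1 + k * (k - 1) * ρ) ^ (1 / k) *
        (∑ x, p x * max (Z x - η) 0 ^ (k / (k - 1))) ^ ((k - 1) / k) + η := by
  classical
  have hk0 : (0:ℝ) < k := by linarith
  have hk1 : (0:ℝ) < k - 1 := by linarith
  have hkk : 0 < k * (k - 1) := mul_pos hk0 hk1
  have hb : (0:ℝ) < 1 + k * (k - 1) * ρ := by nlinarith
  have he1 : (0:ℝ) < k / (k - 1) - 1 := by
    rw [sub_pos, lt_div_iff₀ hk1]; linarith
  have he2 : (0:ℝ) < k / (k - 1) := by positivity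
  have heq : k / (k - 1) * (1 / k) = k / (k - 1) - 1 := by field_simp; ring
  set c : ℝ := (1 + k * (k - 1) * ρ) ^ (1 / k) with hcdef
  have hc : 0 < c := Real.rpow_pos_of_pos hb _
  have hck : c ^ k = 1 + k * (k - 1) * ρ := by
    rw [hcdef, ← Real.rpow_mul hb.le, one_div_mul_cancel hk0.ne', Real.rpow_one]
  have hc1 : 1 < c :=
    (Real.one_lt_rpow_iff_of_pos hb).2 (Or.inl ⟨by nlinarith, by positivity⟩)
  -- p is feasible
  have hDp : ∑ x, p x * (((p x / p x) ^ k - k * (p x / p x) + k - 1) / (k * (k - 1))) ≤ ρ := by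
    have h0 : ∀ x : α, p x * (((p x / p x) ^ k - k * (p x / p x) + k - 1) / (k * (k - 1))) = 0 := by
      intro x
      rw [div_self (hp x).ne', Real.one_rpow]
      norm_num
    rw [Finset.sum_congr rfl fun x _ => h0 x, Finset.sum_const_zero]
    exact hρ.le
  have hpfeas : (∑ x, p x * Z x) ∈ {r : ℝ | ∃ q : α → ℝ, (∀ x, 0 ≤ q x) ∧ (∑ x, q x) = 1 ∧
      (∑ x, p x * (((q x / p x) ^ k - k * (q x / p x) + k - 1) / (k * (k - 1)))) ≤ ρ ∧
      r = ∑ x, q x * Z x} := ⟨p, fun x => (hp x).le, hp1, hDp, rfl⟩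
  have hbddB : BddBelow (Set.range fun η : ℝ => c *
      (∑ x, p x * max (Z x - η) 0 ^ (k / (k - 1))) ^ ((k - 1) / k) + η) := by
    refine ⟨∑ x, p x * Z x, ?_⟩
    rintro y ⟨η, rfl⟩
    exact crd_weak p hp hp1 Z k ρ hk hρ p (fun x => (hp x).le) hp1 hDp η
  have hbddA : BddAbove {r : ℝ | ∃ q : α → ℝ, (∀ x, 0 ≤ q x) ∧ (∑ x, q x) = 1 ∧
      (∑ x, p x * (((q x / p x) ^ k - k * (q x / p x) + k - 1) / (k * (k - 1)))) ≤ ρ ∧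
      r = ∑ x, q x * Z x} := by
    refine ⟨c * (∑ x, p x * max (Z x - 0) 0 ^ (k / (k - 1))) ^ ((k - 1) / k) + 0, ?_⟩
    rintro r ⟨q, h0, h1, hD, rfl⟩
    exact crd_weak p hp hp1 Z k ρ hk hρ q h0 h1 hD 0
  -- nonemptiness and max
  have hne : (Finset.univ : Finset α).Nonempty := by
    by_contra h
    rw [Finset.not_nonempty_iff_eq_empty] at h
    rw [h, Finset.sum_empty] at hp1
    norm_num at hp1
  obtain ⟨x₀, -, hx₀⟩ := Finset.exists_max_image Finset.univ Z hne
  refine le_antisymm ?_ ?_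
  · refine csSup_le ⟨∑ x, p x * Z x, hpfeas⟩ ?_
    rintro r ⟨q, h0, h1, hD, rfl⟩
    exact le_ciInf fun η => crd_weak p hp hp1 Z k ρ hk hρ q h0 h1 hD η
  · -- strong duality
    by_cases hcase : ∃ η', η' < Z x₀ ∧
        c * (∑ x, p x * max (Z x - η') 0 ^ (k / (k - 1) - 1))
          - (∑ x, p x * max (Z x - η') 0 ^ (k / (k - 1))) ^ (1 / k) < 0
    · obtain ⟨η₀, hη₀m, hFη₀⟩ := hcase
      have hM0 : 0 ≤ M := le_trans (hZ x₀).1 (hZ x₀).2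
      have hd1 : 1 < c ^ (k - 1) :=
        (Real.one_lt_rpow_iff_of_pos hc).2 (Or.inl ⟨hc1, by linarith⟩)
      set η₁ : ℝ := -(M / (c ^ (k - 1) - 1)) - 1 with hη₁def
      have hMd : 0 ≤ M / (c ^ (k - 1) - 1) := div_nonneg hM0 (by linarith)
      have hη₁neg : η₁ < 0 := by rw [hη₁def]; linarith
      have hη₁m : η₁ < Z x₀ := lt_of_lt_of_le hη₁neg (hZ x₀).1
      have hu : M / (c ^ (k - 1) - 1) * (c ^ (k - 1) - 1) = M :=
        div_mul_cancel₀ _ (by linarith : c ^ (k - 1) - 1 ≠ 0)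
      have key : M - η₁ < c ^ (k - 1) * (-η₁) := by
        rw [hη₁def]; nlinarith
      have hMη : (0:ℝ) < M - η₁ := by linarith
      have hnη : (0:ℝ) < -η₁ := by linarith
      have hSb : (-η₁) ^ (k / (k - 1) - 1)
          ≤ ∑ x, p x * max (Z x - η₁) 0 ^ (k / (k - 1) - 1) := by
        have hterm : ∀ x : α, p x * (-η₁) ^ (k / (k - 1) - 1)
            ≤ p x * max (Z x - η₁) 0 ^ (k / (k - 1) - 1) := by
          intro x
          refine mul_le_mul_of_nonneg_left (Real.rpow_le_rpow hnη.le ?_ he1.le) (hp x).le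
          exact le_trans (by linarith [(hZ x).1]) (le_max_left _ _)
        calc (-η₁) ^ (k / (k - 1) - 1) = ∑ x, p x * (-η₁) ^ (k / (k - 1) - 1) := by
              rw [← Finset.sum_mul, hp1, one_mul]
          _ ≤ _ := Finset.sum_le_sum fun x _ => hterm x
      have hTb : ∑ x, p x * max (Z x - η₁) 0 ^ (k / (k - 1)) ≤ (M - η₁) ^ (k / (k - 1)) := by
        have hterm : ∀ x : α, p x * max (Z x - η₁) 0 ^ (k / (k - 1))
            ≤ p x * (M - η₁) ^ (k / (k - 1)) := by
          intro x
          refine mul_le_mul_of_nonneg_left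
            (Real.rpow_le_rpow (le_max_right _ _) ?_ he2.le) (hp x).le
          exact max_le (by linarith [(hZ x).2]) (by linarith)
        calc ∑ x, p x * max (Z x - η₁) 0 ^ (k / (k - 1))
            ≤ ∑ x, p x * (M - η₁) ^ (k / (k - 1)) := Finset.sum_le_sum fun x _ => hterm x
          _ = (M - η₁) ^ (k / (k - 1)) := by rw [← Finset.sum_mul, hp1, one_mul]
      have hmid : (M - η₁) ^ (k / (k - 1) - 1) < c * (-η₁) ^ (k / (k - 1) - 1) := by
        have ha' : k / (k - 1) - 1 = 1 / (k - 1) := by field_simp; ring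
        have h2 := Real.rpow_lt_rpow hMη.le key (by positivity : (0:ℝ) < 1 / (k - 1))
        rw [Real.mul_rpow (by positivity) hnη.le, ← Real.rpow_mul hc.le,
          mul_one_div_cancel hk1.ne', Real.rpow_one] at h2
        rw [ha']
        exact h2
      have hT1 : (∑ x, p x * max (Z x - η₁) 0 ^ (k / (k - 1))) ^ (1 / k)
          ≤ (M - η₁) ^ (k / (k - 1) - 1) := by
        have h3 : (∑ x, p x * max (Z x - η₁) 0 ^ (k / (k - 1))) ^ (1 / k)
            ≤ ((M - η₁) ^ (k / (k - 1))) ^ (1 / k) :=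
          Real.rpow_le_rpow (Finset.sum_nonneg fun x _ => mul_nonneg (hp x).le
            (Real.rpow_nonneg (le_max_right _ _) _)) hTb (by positivity)
        rwa [← Real.rpow_mul hMη.le, heq] at h3
      have hFη₁ : 0 < c * (∑ x, p x * max (Z x - η₁) 0 ^ (k / (k - 1) - 1))
          - (∑ x, p x * max (Z x - η₁) 0 ^ (k / (k - 1))) ^ (1 / k) := by
        have := mul_le_mul_of_nonneg_left hSb hc.le
        linarith
      have hFc : Continuous fun η : ℝ =>
          c * (∑ x, p x * max (Z x - η) 0 ^ (k / (k - 1) - 1))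
          - (∑ x, p x * max (Z x - η) 0 ^ (k / (k - 1))) ^ (1 / k) := by
        have hS : Continuous fun η : ℝ => ∑ x, p x * max (Z x - η) 0 ^ (k / (k - 1) - 1) := by
          apply continuous_finset_sum
          intro x _
          exact continuous_const.mul
            (((continuous_const.sub continuous_id).max continuous_const).rpow_const
              fun _ => Or.inr he1.le)
        have hT : Continuous fun η : ℝ => ∑ x, p x * max (Z x - η) 0 ^ (k / (k - 1)) := by
          apply continuous_finset_sum
          intro x _
          exact continuous_const.mul
            (((continuous_const.sub continuous_id).max continuous_const).rpow_const
              fun _ => Or.inr he2.le)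
        exact (continuous_const.mul hS).sub (hT.rpow_const fun _ => Or.inr (by positivity))
      obtain ⟨η₂, hη₂m, hFη₂⟩ : ∃ η₂, η₂ < Z x₀ ∧
          (c * (∑ x, p x * max (Z x - η₂) 0 ^ (k / (k - 1) - 1))
            - (∑ x, p x * max (Z x - η₂) 0 ^ (k / (k - 1))) ^ (1 / k) = 0) := by
        rcases le_total η₁ η₀ with hle | hle
        · obtain ⟨η₂, hmem, hval⟩ :=
            intermediate_value_Icc' hle hFc.continuousOn ⟨hFη₀.le, hFη₁.le⟩
          exact ⟨η₂, lt_of_le_of_lt hmem.2 hη₀m, hval⟩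
        · obtain ⟨η₂, hmem, hval⟩ :=
            intermediate_value_Icc hle hFc.continuousOn ⟨hFη₀.le, hFη₁.le⟩
          exact ⟨η₂, lt_of_le_of_lt hmem.2 hη₁m, hval⟩
      have hTpos : 0 < ∑ x, p x * max (Z x - η₂) 0 ^ (k / (k - 1)) := by
        refine Finset.sum_pos' (fun x _ => mul_nonneg (hp x).le
          (Real.rpow_nonneg (le_max_right _ _) _)) ⟨x₀, Finset.mem_univ _, ?_⟩
        exact mul_pos (hp x₀)
          (Real.rpow_pos_of_pos (lt_of_lt_of_le (by linarith) (le_max_left _ _)) _)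
      obtain ⟨q, hq0, hq1, hqD, hqZ⟩ :=
        crd_point p hp hp1 Z k ρ hk hρ η₂ hTpos (sub_eq_zero.mp hFη₂)
      calc (⨅ η : ℝ, c * (∑ x, p x * max (Z x - η) 0 ^ (k / (k - 1))) ^ ((k - 1) / k) + η)
          ≤ c * (∑ x, p x * max (Z x - η₂) 0 ^ (k / (k - 1))) ^ ((k - 1) / k) + η₂ :=
            ciInf_le hbddB η₂
        _ = ∑ x, q x * Z x := hqZ.symm
        _ ≤ _ := le_csSup hbddA ⟨q, hq0, hq1, hqD, rfl⟩
    · push_neg at hcase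
      set s : Finset α := Finset.univ.filter (fun x => Z x ≠ Z x₀) with hsdef
      have hsup : ∀ h : s.Nonempty, s.sup' h Z < Z x₀ := by
        intro h
        rw [Finset.sup'_lt_iff]
        intro b hb
        rw [hsdef, Finset.mem_filter] at hb
        exact lt_of_le_of_ne (hx₀ b (Finset.mem_univ b)) hb.2
      set η₂ : ℝ := if h : s.Nonempty then (s.sup' h Z + Z x₀) / 2 else Z x₀ - 1 with hη₂def
      have hη₂m : η₂ < Z x₀ := by
        rw [hη₂def]
        split_ifs with h
        · have := hsup h
          linarith
        · linarith
      have hη₂Z : ∀ x, Z x ≠ Z x₀ → Z x ≤ η₂ := by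
        intro x hx
        have hxs : x ∈ s := by rw [hsdef, Finset.mem_filter]; exact ⟨Finset.mem_univ x, hx⟩
        have h : s.Nonempty := ⟨x, hxs⟩
        have h1 : Z x ≤ s.sup' h Z := Finset.le_sup' Z hxs
        have h2 := hsup h
        rw [hη₂def, dif_pos h]
        linarith
      set a : ℝ := ∑ x, if Z x = Z x₀ then p x else 0 with hadef
      have ha : 0 < a := by
        have h1 : (if Z x₀ = Z x₀ then p x₀ else 0) ≤ a :=
          Finset.single_le_sum (f := fun x => if Z x = Z x₀ then p x else 0)
            (fun i _ => by split_ifs; exacts [(hp i).le, le_refl 0])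
            (Finset.mem_univ x₀)
        rw [if_pos rfl] at h1
        exact lt_of_lt_of_le (hp x₀) h1
      have hw : (0:ℝ) < Z x₀ - η₂ := by linarith
      have hSA : ∑ x, p x * max (Z x - η₂) 0 ^ (k / (k - 1) - 1)
          = a * (Z x₀ - η₂) ^ (k / (k - 1) - 1) := by
        rw [hadef, Finset.sum_mul]
        refine Finset.sum_congr rfl fun x _ => ?_
        by_cases hx : Z x = Z x₀
        · rw [if_pos hx, hx, max_eq_left hw.le]
        · rw [if_neg hx, zero_mul, max_eq_right (by linarith [hη₂Z x hx]),
            Real.zero_rpow he1.ne', mul_zero]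
      have hTA : ∑ x, p x * max (Z x - η₂) 0 ^ (k / (k - 1))
          = a * (Z x₀ - η₂) ^ (k / (k - 1)) := by
        rw [hadef, Finset.sum_mul]
        refine Finset.sum_congr rfl fun x _ => ?_
        by_cases hx : Z x = Z x₀
        · rw [if_pos hx, hx, max_eq_left hw.le]
        · rw [if_neg hx, zero_mul, max_eq_right (by linarith [hη₂Z x hx]),
            Real.zero_rpow he2.ne', mul_zero]
      have hkey : a ^ (1 / k) ≤ c * a := by
        have h0 := hcase η₂ hη₂m
        rw [hSA, hTA] at h0
        have h1 : (a * (Z x₀ - η₂) ^ (k / (k - 1))) ^ (1 / k)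
            = a ^ (1 / k) * (Z x₀ - η₂) ^ (k / (k - 1) - 1) := by
          rw [Real.mul_rpow ha.le (Real.rpow_nonneg hw.le _), ← Real.rpow_mul hw.le, heq]
        rw [h1, ← mul_assoc] at h0
        have h3 : a ^ (1 / k) * (Z x₀ - η₂) ^ (k / (k - 1) - 1)
            ≤ c * a * (Z x₀ - η₂) ^ (k / (k - 1) - 1) := by linarith
        exact le_of_mul_le_mul_right h3 (Real.rpow_pos_of_pos hw _)
      have hck2 : a ≤ c ^ k * a ^ k := by
        have h4 := Real.rpow_le_rpow (Real.rpow_nonneg ha.le _) hkey hk0.le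
        rwa [← Real.rpow_mul ha.le, one_div_mul_cancel hk0.ne', Real.rpow_one,
          Real.mul_rpow hc.le ha.le] at h4
      set q : α → ℝ := fun x => if Z x = Z x₀ then p x / a else 0 with hqdef
      have hq0 : ∀ x, 0 ≤ q x := by
        intro x
        rw [hqdef]
        dsimp only
        split_ifs
        · exact div_nonneg (hp x).le ha.le
        · exact le_refl 0
      have hq1 : ∑ x, q x = 1 := by
        have hpt : ∀ x : α, q x = (if Z x = Z x₀ then p x else 0) / a := by
          intro x
          rw [hqdef]
          dsimp only
          split_ifs
          · rfl
          · rw [zero_div]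
        rw [Finset.sum_congr rfl fun x _ => hpt x, ← Finset.sum_div, ← hadef,
          div_self ha.ne']
      have hqD : ∑ x, p x * (((q x / p x) ^ k - k * (q x / p x) + k - 1) / (k * (k - 1))) ≤ ρ := by
        have hpt : ∀ x : α, p x * (q x / p x) ^ k
            = (if Z x = Z x₀ then p x else 0) * (a ^ k)⁻¹ := by
          intro x
          rw [hqdef]
          dsimp only
          by_cases hx : Z x = Z x₀
          · rw [if_pos hx, if_pos hx]
            have hd : p x / a / p x = a⁻¹ := by
              rw [div_div, mul_comm, ← div_div, div_self (hp x).ne', one_div]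
            rw [hd, Real.inv_rpow ha.le]
          · rw [if_neg hx, if_neg hx, zero_div, Real.zero_rpow hk0.ne', mul_zero, zero_mul]
        rw [crd_expand p _ hp k, Finset.sum_congr rfl fun x _ => hpt x, ← Finset.sum_mul,
          ← hadef, hq1, hp1]
        rw [div_le_iff₀ hkk]
        have hak : 0 < a ^ k := Real.rpow_pos_of_pos ha _
        have h5 : a * (a ^ k)⁻¹ ≤ 1 + k * (k - 1) * ρ := by
          rw [← div_eq_mul_inv, div_le_iff₀ hak]
          calc a ≤ c ^ k * a ^ k := hck2
            _ = (1 + k * (k - 1) * ρ) * a ^ k := by rw [hck]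
        nlinarith
      have hqZ : ∑ x, q x * Z x = Z x₀ := by
        have hpt : ∀ x : α, q x * Z x = (if Z x = Z x₀ then p x else 0) * (Z x₀ / a) := by
          intro x
          rw [hqdef]
          dsimp only
          by_cases hx : Z x = Z x₀
          · rw [if_pos hx, if_pos hx, hx]
            ring
          · rw [if_neg hx, if_neg hx, zero_mul, zero_mul]
        rw [Finset.sum_congr rfl fun x _ => hpt x, ← Finset.sum_mul, ← hadef, mul_comm,
          div_mul_cancel₀ _ ha.ne']
      have hmem : Z x₀ ∈ {r : ℝ | ∃ q : α → ℝ, (∀ x, 0 ≤ q x) ∧ (∑ x, q x) = 1 ∧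
          (∑ x, p x * (((q x / p x) ^ k - k * (q x / p x) + k - 1) / (k * (k - 1)))) ≤ ρ ∧
          r = ∑ x, q x * Z x} := ⟨q, hq0, hq1, hqD, hqZ.symm⟩
      have hinf : (⨅ η : ℝ, c * (∑ x, p x * max (Z x - η) 0 ^ (k / (k - 1))) ^ ((k - 1) / k)
          + η) ≤ Z x₀ := by
        have h6 := ciInf_le hbddB (Z x₀)
        have hzero : ∑ x, p x * max (Z x - Z x₀) 0 ^ (k / (k - 1)) = 0 :=
          Finset.sum_eq_zero fun x _ => by
            rw [max_eq_right (by linarith [hx₀ x (Finset.mem_univ x)]),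
              Real.zero_rpow he2.ne', mul_zero]
        rwa [hzero, Real.zero_rpow (ne_of_gt (by positivity : (0:ℝ) < (k - 1) / k)),
          mul_zero, zero_add] at h6
      exact le_trans hinf (le_csSup hbddA hmem)
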